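/- arXiv:2509.06320 — 3 statements merged into one kernel-verified Lean document; each statement's English description precedes it below -/
import Mathlib

section
/- For an odd positive integer n, the smallest positive integer λ such that (2n(n²+4)/(n²+n+4))·λ is an integer is λ = (n²+n+4)/2, and for this λ the value equals n(n²+4). -/
theorem stmt_3 (n : ℕ) (hn : 0 < n) (hodd : Odd n) :
    IsLeast {l : ℕ | 0 < l ∧ ∃ k : ℤ,
        ((2 * n * (n ^ 2 + 4) * l : ℚ) / (n ^ 2 + n + 4)) = (k : ℚ)}
      ((n ^ 2 + n + 4) / 2) ∧
    (2 * n * (n ^ 2 + 4) * (((n ^ 2 + n + 4) / 2 : ℕ) : ℚ)) / (n ^ 2 + n + 4)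
      = n * (n ^ 2 + 4) := by
  obtain ⟨j, hj⟩ := hodd
  have hsq : n ^ 2 = 4 * j ^ 2 + 4 * j + 1 := by subst hj; ring
  have hs : (n ^ 2 + n + 4) / 2 * 2 = n ^ 2 + n + 4 := by omega
  have hne : ((n : ℚ) ^ 2 + n + 4) ≠ 0 := by positivity
  have hsQ : (((n ^ 2 + n + 4) / 2 : ℕ) : ℚ) * 2 = (n : ℚ) ^ 2 + n + 4 := by
    have := congrArg (fun x : ℕ => (x : ℚ)) hs
    push_cast at this
    linarith
  -- coprimality facts
  have hc4 : Nat.Coprime n 4 := by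
    have h2 : Nat.Coprime n 2 := by
      rw [Nat.coprime_two_right]; exact ⟨j, hj⟩
    simpa using h2.pow_right 2
  have hcn : Nat.Coprime n (n ^ 2 + n + 4) := by
    have : Nat.Coprime n (4 + n * (n + 1)) := by
      rw [Nat.coprime_add_mul_left_right]; exact hc4
    convert this using 1; ring
  have hcn2 : Nat.Coprime (n ^ 2 + 4) (n ^ 2 + n + 4) := by
    have h1 : Nat.Coprime (n ^ 2 + 4) n := by
      have : Nat.Coprime n (4 + n * n) := by
        rw [Nat.coprime_add_mul_left_right]; exact hc4
      have := this.symm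
      rw [Nat.coprime_comm]
      convert this.symm using 1; ring
    have : Nat.Coprime (n ^ 2 + 4) (n + (n ^ 2 + 4)) := by
      rw [Nat.coprime_add_self_right]; exact h1
    convert this using 1; ring
  have hcop : Nat.Coprime ((n ^ 2 + n + 4) / 2) (n * (n ^ 2 + 4)) := by
    have hm : Nat.Coprime (n ^ 2 + n + 4) (n * (n ^ 2 + 4)) :=
      (hcn.symm.mul_right hcn2.symm)
    exact Nat.Coprime.coprime_dvd_left ⟨2, hs.symm⟩ hm
  have hval : (2 * n * (n ^ 2 + 4) * (((n ^ 2 + n + 4) / 2 : ℕ) : ℚ)) / (n ^ 2 + n + 4)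
      = n * (n ^ 2 + 4) := by
    rw [div_eq_iff hne]
    linear_combination ((n : ℚ) * ((n : ℚ) ^ 2 + 4)) * hsQ
  refine ⟨⟨⟨by omega, ⟨(n * (n ^ 2 + 4) : ℕ), by push_cast at hval ⊢; exact hval⟩⟩, ?_⟩, hval⟩
  rintro l ⟨hl, k, hk⟩
  rw [div_eq_iff hne] at hk
  have hint : (2 * n * (n ^ 2 + 4) * l : ℤ) = k * (n ^ 2 + n + 4) := by exact_mod_cast hk
  have hdvd : (n ^ 2 + n + 4) ∣ 2 * (n * (n ^ 2 + 4) * l) := by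
    have : ((n ^ 2 + n + 4 : ℕ) : ℤ) ∣ ((2 * (n * (n ^ 2 + 4) * l) : ℕ) : ℤ) := by
      push_cast
      exact ⟨k, by linarith [hint]⟩
    exact_mod_cast this
  have hdvd2 : (n ^ 2 + n + 4) / 2 ∣ n * (n ^ 2 + 4) * l := by
    have h2 : 2 * ((n ^ 2 + n + 4) / 2) ∣ 2 * (n * (n ^ 2 + 4) * l) := by
      rwa [show 2 * ((n ^ 2 + n + 4) / 2) = n ^ 2 + n + 4 by omega]
    exact (mul_dvd_mul_iff_left (two_ne_zero)).mp h2
  have : (n ^ 2 + n + 4) / 2 ∣ l := hcop.dvd_of_dvd_mul_left hdvd2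
  exact Nat.le_of_dvd hl this
end

section
/- Let n be a positive integer and let M be the 2n×2n integer matrix in block form [[2n·Iₙ, B],[B, D]], where B is the n×n matrix with all entries equal to n, and D is the n×n matrix with diagonal entries n²+2n and off-diagonal entries n². Then det(M) = n^(2n)·2^(2n-2)·(n²+4). -/
open Matrix

lemma qdet (n : ℕ) (hn : 0 < n) :
    (Matrix.fromBlocks
        ((2 * n : ℚ) • (1 : Matrix (Fin n) (Fin n) ℚ))
        (Matrix.of fun _ _ : Fin n => (n : ℚ))
        (Matrix.of fun _ _ : Fin n => (n : ℚ))
        (Matrix.of fun i j : Fin n => if i = j then (n ^ 2 + 2 * n : ℚ) else (n ^ 2 : ℚ))).det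
      = (2 * n : ℚ) ^ n * ((2 * n : ℚ) ^ n * (1 + (n : ℚ) ^ 2 / 4)) := by
  have h2n : (2 * n : ℚ) ≠ 0 := by positivity
  haveI : Invertible ((2 * n : ℚ) • (1 : Matrix (Fin n) (Fin n) ℚ)) :=
    ⟨(2 * n : ℚ)⁻¹ • 1, by
      rw [smul_mul_smul_comm, one_mul, inv_mul_cancel₀ h2n, one_smul], by
      rw [smul_mul_smul_comm, one_mul, mul_inv_cancel₀ h2n, one_smul]⟩
  rw [det_fromBlocks₁₁]
  have hinv : ⅟((2 * n : ℚ) • (1 : Matrix (Fin n) (Fin n) ℚ)) = (2 * n : ℚ)⁻¹ • 1 :=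
    invOf_eq_right_inv (by
      rw [smul_mul_smul_comm, one_mul, mul_inv_cancel₀ h2n, one_smul])
  rw [hinv]
  have hS : (Matrix.of fun i j : Fin n => if i = j then (n ^ 2 + 2 * n : ℚ) else (n ^ 2 : ℚ))
      - (Matrix.of fun _ _ : Fin n => (n : ℚ)) * ((2 * n : ℚ)⁻¹ • 1)
        * (Matrix.of fun _ _ : Fin n => (n : ℚ))
      = (2 * n : ℚ) • (1 + replicateCol Unit (fun _ => (n : ℚ) / 4) * replicateRow Unit (fun _ => (1 : ℚ))) := by
    ext i j
    simp only [Matrix.sub_apply, Matrix.smul_apply, Matrix.add_apply, Matrix.mul_apply,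
      Matrix.of_apply, Matrix.one_apply, replicateCol_apply, replicateRow_apply, Matrix.smul_apply,
      Finset.sum_const, Finset.card_univ, Fintype.card_fin, Fintype.card_unit, smul_eq_mul,
      Finset.sum_ite_eq, Finset.univ_unique]
    by_cases h : i = j <;> simp [h] <;> field_simp <;> ring
  rw [hS, det_smul, det_smul, det_one, mul_one, Fintype.card_fin,
    det_one_add_replicateCol_mul_replicateRow]
  congr 1
  congr 1
  simp [dotProduct, Finset.sum_const, mul_comm]
  ring

theorem stmt_4 (n : ℕ) (hn : 0 < n) :
    (Matrix.fromBlocks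
        ((2 * n : ℤ) • (1 : Matrix (Fin n) (Fin n) ℤ))
        (Matrix.of fun _ _ : Fin n => (n : ℤ))
        (Matrix.of fun _ _ : Fin n => (n : ℤ))
        (Matrix.of fun i j : Fin n => if i = j then (n ^ 2 + 2 * n : ℤ) else (n ^ 2 : ℤ))).det
      = (n : ℤ) ^ (2 * n) * 2 ^ (2 * n - 2) * (n ^ 2 + 4) := by
  apply (Int.cast_injective (α := ℚ))
  have hdet := RingHom.map_det (Int.castRingHom ℚ) (Matrix.fromBlocks
        ((2 * n : ℤ) • (1 : Matrix (Fin n) (Fin n) ℤ))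
        (Matrix.of fun _ _ : Fin n => (n : ℤ))
        (Matrix.of fun _ _ : Fin n => (n : ℤ))
        (Matrix.of fun i j : Fin n => if i = j then (n ^ 2 + 2 * n : ℤ) else (n ^ 2 : ℤ)))
  simp only [Int.coe_castRingHom] at hdet
  rw [show ((Matrix.fromBlocks
        ((2 * n : ℤ) • (1 : Matrix (Fin n) (Fin n) ℤ))
        (Matrix.of fun _ _ : Fin n => (n : ℤ))
        (Matrix.of fun _ _ : Fin n => (n : ℤ))
        (Matrix.of fun i j : Fin n => if i = j then (n ^ 2 + 2 * n : ℤ) else (n ^ 2 : ℤ))).det : ℚ)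
      = _ from hdet]
  have hmap : (Int.castRingHom ℚ).mapMatrix (Matrix.fromBlocks
        ((2 * n : ℤ) • (1 : Matrix (Fin n) (Fin n) ℤ))
        (Matrix.of fun _ _ : Fin n => (n : ℤ))
        (Matrix.of fun _ _ : Fin n => (n : ℤ))
        (Matrix.of fun i j : Fin n => if i = j then (n ^ 2 + 2 * n : ℤ) else (n ^ 2 : ℤ)))
      = Matrix.fromBlocks
        ((2 * n : ℚ) • (1 : Matrix (Fin n) (Fin n) ℚ))
        (Matrix.of fun _ _ : Fin n => (n : ℚ))
        (Matrix.of fun _ _ : Fin n => (n : ℚ))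
        (Matrix.of fun i j : Fin n => if i = j then (n ^ 2 + 2 * n : ℚ) else (n ^ 2 : ℚ)) := by
    ext i j
    rcases i with i | i <;> rcases j with j | j <;>
      simp only [RingHom.mapMatrix_apply, Matrix.map_apply, fromBlocks_apply₁₁,
        fromBlocks_apply₁₂, fromBlocks_apply₂₁, fromBlocks_apply₂₂, Matrix.smul_apply,
        Matrix.one_apply, Matrix.of_apply, smul_eq_mul] <;>
      by_cases h : i = j <;> simp [h] <;> push_cast <;> ring
  rw [hmap, qdet n hn]
  obtain ⟨m, rfl⟩ : ∃ m, n = m + 1 := ⟨n - 1, (Nat.succ_pred_eq_of_pos hn).symm⟩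
  push_cast
  rw [show 2 * (m + 1) - 2 = 2 * m from by omega]
  have e1 : ((m:ℚ)+1)^(m+1) * ((m:ℚ)+1)^(m+1) = ((m:ℚ)+1)^(2*(m+1)) := by
    rw [← pow_add]; congr 1; ring
  have e2 : (2:ℚ)^(m+1) * 2^(m+1) = 2^(2*m) * 4 := by
    rw [← pow_add, show m+1+(m+1) = 2*m+2 from by ring, pow_add]; norm_num
  rw [mul_pow]
  calc (2:ℚ) ^ (m + 1) * ((m:ℚ) + 1) ^ (m + 1)
        * ((2:ℚ) ^ (m + 1) * ((m:ℚ) + 1) ^ (m + 1) * (1 + ((m:ℚ) + 1) ^ 2 / 4))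
      = (((m:ℚ)+1)^(m+1) * ((m:ℚ)+1)^(m+1)) * ((2:ℚ)^(m+1)*2^(m+1))
          * (1 + ((m:ℚ)+1)^2/4) := by ring
    _ = ((m:ℚ)+1)^(2*(m+1)) * (2^(2*m) * 4) * (1 + ((m:ℚ)+1)^2/4) := by rw [e1, e2]
    _ = ((m:ℚ)+1) ^ (2*(m+1)) * 2 ^ (2*m) * (((m:ℚ)+1)^2 + 4) := by ring
end

section
/- Let n be an odd positive integer. If x, y are complex numbers with y ≠ 0 satisfying xⁿ = 1, x·y = x^(n-1)·y, and y² = 1 + y·∑_{j=1}^{n} x^j, then x = 1 and y = (n+√(n²+4))/2 or y = (n-√(n²+4))/2. -/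
theorem stmt_16 (n : ℕ) (hn : 0 < n) (hodd : Odd n) (x y : ℂ) (hy : y ≠ 0)
    (h1 : x ^ n = 1) (h2 : x * y = x ^ (n - 1) * y)
    (h3 : y ^ 2 = 1 + y * ∑ j ∈ Finset.Icc 1 n, x ^ j) :
    x = 1 ∧ (y = ((n : ℂ) + Real.sqrt (n ^ 2 + 4)) / 2 ∨
      y = ((n : ℂ) - Real.sqrt (n ^ 2 + 4)) / 2) := by
  obtain ⟨k, hk⟩ := hodd
  have hn1 : n - 1 = 2 * k := by omega
  have hx : x = x ^ (2 * k) := by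
    have := mul_right_cancel₀ hy h2
    rwa [hn1] at this
  have hx2 : x ^ 2 = 1 := by
    calc x ^ 2 = x ^ (2 * k) * x := by rw [← hx]; ring
    _ = x ^ (2 * k + 1) := by ring
    _ = 1 := by rw [← hk]; exact h1
  have hx1 : x = 1 := by
    rw [hx, pow_mul, hx2, one_pow]
  refine ⟨hx1, ?_⟩
  have hsum : ∑ j ∈ Finset.Icc 1 n, x ^ j = (n : ℂ) := by
    simp [hx1]
  rw [hsum] at h3
  set s : ℂ := ((Real.sqrt (n ^ 2 + 4) : ℝ) : ℂ) with hs
  have hs2 : s ^ 2 = (n : ℂ) ^ 2 + 4 := by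
    rw [hs, ← Complex.ofReal_pow, Real.sq_sqrt (by positivity)]
    push_cast
    ring
  have key : (y - ((n : ℂ) + s) / 2) * (y - ((n : ℂ) - s) / 2) = 0 := by
    have : (y - ((n : ℂ) + s) / 2) * (y - ((n : ℂ) - s) / 2)
        = y ^ 2 - (n : ℂ) * y + ((n:ℂ)^2 - s^2) / 4 := by ring
    rw [this, hs2, h3]
    ring
  rcases mul_eq_zero.mp key with h | h
  · exact Or.inl (sub_eq_zero.mp h)
  · exact Or.inr (sub_eq_zero.mp h)
end
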